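/- Let α, β be non-proportional linear forms and φ = α²β² ∈ S⁴ (Petrov type (22)). Then conf(φ) = aut(φ), and this common space is a complex subspace of sl₂(ℂ) of dimension 1. -/

import Mathlib

open MvPolynomial

/-- The action of `A ∈ sl₂(ℂ)` on `ℂ[x,y]` by derivations:
`A·f = −(a x + c y) ∂f/∂x − (b x + d y) ∂f/∂y` for `A = [[a,b],[c,d]]`. -/
noncomputable def sAct (A : Matrix (Fin 2) (Fin 2) ℂ) (f : MvPolynomial (Fin 2) ℂ) :
    MvPolynomial (Fin 2) ℂ :=
  -((C (A 0 0) * X 0 + C (A 1 0) * X 1) * pderiv 0 f)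
    - ((C (A 0 1) * X 0 + C (A 1 1) * X 1) * pderiv 1 f)

/-- A linear form: a nonzero homogeneous degree-1 polynomial in `ℂ[x,y]`. -/
def IsLinForm (α : MvPolynomial (Fin 2) ℂ) : Prop := α ≠ 0 ∧ α.IsHomogeneous 1

lemma deg2 (d : Fin 2 →₀ ℕ) : d.degree = d 0 + d 1 := by
  classical
  rw [Finsupp.degree_apply, Finset.sum_subset (Finset.subset_univ d.support)
    (by intro x _ hx; exact Finsupp.notMem_support_iff.mp hx), Fin.sum_univ_two]

lemma linform_repr (α : MvPolynomial (Fin 2) ℂ) (h : α.IsHomogeneous 1) :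
    ∃ p q : ℂ, α = C p * X 0 + C q * X 1 := by
  classical
  refine ⟨coeff (Finsupp.single 0 1) α, coeff (Finsupp.single 1 1) α, ?_⟩
  ext m
  simp only [coeff_add, coeff_C_mul, coeff_X']
  by_cases h0 : Finsupp.single (0 : Fin 2) 1 = m
  · subst h0; simp [Finsupp.single_eq_single_iff]
  by_cases h1 : Finsupp.single (1 : Fin 2) 1 = m
  · subst h1; simp [Finsupp.single_eq_single_iff]
  · rw [if_neg h0, if_neg h1]
    ring_nf
    by_contra hc
    have hd := h hc
    change Finsupp.weight (fun _ => 1) m = 1 at hd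
    rw [← Finsupp.degree_eq_weight_one, deg2] at hd
    have hcase : (m 0 = 1 ∧ m 1 = 0) ∨ (m 0 = 0 ∧ m 1 = 1) := by omega
    rcases hcase with ⟨ha, hb⟩ | ⟨ha, hb⟩
    · exact h0 (by ext i; fin_cases i <;> simp [ha, hb, Finsupp.single_apply])
    · exact h1 (by ext i; fin_cases i <;> simp [ha, hb, Finsupp.single_apply])

lemma nonprop (p q r s : ℂ)
    (hβ0 : (C r * X 0 + C s * X 1 : MvPolynomial (Fin 2) ℂ) ≠ 0)
    (h : ∀ c : ℂ, (C p * X 0 + C q * X 1 : MvPolynomial (Fin 2) ℂ)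
        ≠ c • (C r * X 0 + C s * X 1)) :
    p*s - q*r ≠ 0 := by
  intro he
  by_cases hr : r = 0
  · have hs : s ≠ 0 := by
      intro hs; apply hβ0; rw [hr, hs]; simp
    have hp : p = 0 := by
      have : p * s = 0 := by rw [hr] at he; linear_combination he
      exact (mul_eq_zero.mp this).resolve_right hs
    apply h (q/s)
    rw [smul_eq_C_mul, hr, hp, mul_add, ← mul_assoc, ← mul_assoc, ← C_mul, ← C_mul,
      mul_zero, div_mul_cancel₀ q hs]
  · apply h (p/r)
    have hq : p/r*s = q := by field_simp; linear_combination he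
    rw [smul_eq_C_mul, mul_add, ← mul_assoc, ← mul_assoc, ← C_mul, ← C_mul,
      div_mul_cancel₀ p hr, hq]

lemma char (p q r s : ℂ) (he : p*s - q*r ≠ 0) (a b c d t : ℂ) :
    (sAct !![a,b;c,d] ((C p * X 0 + C q * X 1)^2 * (C r * X 0 + C s * X 1)^2)
      = t • ((C p * X 0 + C q * X 1)^2 * (C r * X 0 + C s * X 1)^2))
    ↔ (a*p*q + b*q^2 - c*p^2 - d*p*q = 0
       ∧ -(a*r*s) - b*s^2 + c*r^2 + d*r*s = 0
       ∧ t = -2*(a + d)) := by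
  constructor
  · intro hyp
    have key : ∀ u v : ℂ,
      2*(p*s-q*r)^3*u*v*(v*(((-(a*p+b*q)*s + (c*p+d*q)*r))*u + ((-(c*p+d*q)*p + (a*p+b*q)*q))*v)
          + u*(((-(a*r+b*s)*s + (c*r+d*s)*r))*u + ((-(c*r+d*s)*p + (a*r+b*s)*q))*v))
        = t*(p*s-q*r)^4*u^2*v^2 := by
      intro u v
      have H := congrArg (eval ![s*u - q*v, p*v - r*u]) hyp
      simp [sAct, smul_eq_C_mul, pderiv_mul, pderiv_pow, pderiv_X_self, pderiv_X_of_ne,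
        Matrix.cons_val_zero, Matrix.cons_val_one, Matrix.head_cons] at H
      linear_combination H
    have H1 := key 1 1
    have H2 := key 1 (-1)
    have H3 := key 1 2
    have e3 : (12 : ℂ) * (p*s-q*r)^3 ≠ 0 := by
      exact mul_ne_zero (by norm_num) (pow_ne_zero _ he)
    have ha2 : a*p*q + b*q^2 - c*p^2 - d*p*q = 0 := by
      have h12 : (12 : ℂ) * (p*s-q*r)^3 * (a*p*q + b*q^2 - c*p^2 - d*p*q) = 0 := by
        linear_combination (-3:ℂ)*H1 - H2 + H3
      exact (mul_eq_zero.mp h12).resolve_left e3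
    have hb1 : -(a*r*s) - b*s^2 + c*r^2 + d*r*s = 0 := by
      have h12 : (12 : ℂ) * (p*s-q*r)^3 * (-(a*r*s) - b*s^2 + c*r^2 + d*r*s) = 0 := by
        linear_combination (6:ℂ)*H1 - 2*H2 - H3
      exact (mul_eq_zero.mp h12).resolve_left e3
    refine ⟨ha2, hb1, ?_⟩
    have h4 : (p*s-q*r)^4 * (t + 2*(a+d)) = 0 := by
      linear_combination (-1:ℂ)*H1 + 2*(p*s-q*r)^3*ha2 + 2*(p*s-q*r)^3*hb1
    have := (mul_eq_zero.mp h4).resolve_left (pow_ne_zero _ he)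
    linear_combination this
  · rintro ⟨ha2, hb1, ht⟩
    apply MvPolynomial.funext
    intro x
    simp [sAct, smul_eq_C_mul, pderiv_mul, pderiv_pow, pderiv_X_self, pderiv_X_of_ne]
    refine mul_left_cancel₀ he ?_
    linear_combination (2*(p*x 0+q*x 1)*(r*x 0+s*x 1)^3)*ha2
      + (2*(p*x 0+q*x 1)^3*(r*x 0+s*x 1))*hb1
      + (-(p*s-q*r)*(p*x 0+q*x 1)^2*(r*x 0+s*x 1)^2)*ht

lemma solve_prop (p q r s a b c : ℂ) (he : p*s - q*r ≠ 0)
    (hab : -(p*s+q*r)*b - 2*p*r*a = 0)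
    (hac : -(p*s+q*r)*c + 2*q*s*a = 0)
    (hbc : -2*q*s*b - 2*p*r*c = 0) :
    ∃ u : ℂ, u * (-(p*s+q*r)) = a ∧ u * (2*p*r) = b ∧ u * (-2*q*s) = c := by
  by_cases hps : p*s+q*r = 0
  · have hpr : p*r ≠ 0 := by
      intro hpr; apply he
      have h2 : (p*s-q*r)^2 = 0 := by
        linear_combination (p*s+q*r)*hps - 4*(q*s)*hpr
      exact (pow_eq_zero_iff (by norm_num : 2 ≠ 0)).mp h2
    have hne : (2:ℂ)*p*r ≠ 0 := by
      intro h'; apply hpr; linear_combination (1/2 : ℂ)*h'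
    refine ⟨b / (2*p*r), ?_, ?_, ?_⟩
    · rw [div_mul_eq_mul_div, div_eq_iff hne]; linear_combination hab
    · exact div_mul_cancel₀ b hne
    · rw [div_mul_eq_mul_div, div_eq_iff hne]; linear_combination hbc
  · have hne : -(p*s+q*r) ≠ 0 := neg_ne_zero.mpr hps
    refine ⟨a / (-(p*s+q*r)), ?_, ?_, ?_⟩
    · exact div_mul_cancel₀ a hne
    · rw [div_mul_eq_mul_div, div_eq_iff hne]; linear_combination (-1:ℂ)*hab
    · rw [div_mul_eq_mul_div, div_eq_iff hne]; linear_combination (-1:ℂ)*hac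

/-- Petrov type (22)=(D): for `φ = α²β²` with `α,β` non-proportional linear forms,
`conf(φ) = aut(φ)` and this space is a 1-dimensional complex subspace of `sl₂(ℂ)`. -/
theorem aut_conf_type_D (α β : MvPolynomial (Fin 2) ℂ)
    (hα : IsLinForm α) (hβ : IsLinForm β) (hαβ : ∀ c : ℂ, α ≠ c • β) :
    {A : Matrix (Fin 2) (Fin 2) ℂ |
        A.trace = 0 ∧ ∃ c : ℂ, sAct A (α ^ 2 * β ^ 2) = c • (α ^ 2 * β ^ 2)} =
      {A : Matrix (Fin 2) (Fin 2) ℂ | A.trace = 0 ∧ sAct A (α ^ 2 * β ^ 2) = 0} ∧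
    ∃ S : Submodule ℂ (Matrix (Fin 2) (Fin 2) ℂ),
      (S : Set (Matrix (Fin 2) (Fin 2) ℂ)) =
        {A | A.trace = 0 ∧ sAct A (α ^ 2 * β ^ 2) = 0} ∧
      Module.finrank ℂ S = 1 := by
  obtain ⟨hα0, hαh⟩ := hα
  obtain ⟨hβ0, hβh⟩ := hβ
  obtain ⟨p, q, hpq⟩ := linform_repr α hαh
  obtain ⟨r, s, hrs⟩ := linform_repr β hβh
  subst hpq; subst hrs
  have he : p*s - q*r ≠ 0 := nonprop p q r s hβ0 hαβ
  constructor
  · ext A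
    simp only [Set.mem_setOf_eq]
    constructor
    · rintro ⟨htr, t, hc⟩
      refine ⟨htr, ?_⟩
      have htr' : A 0 0 + A 1 1 = 0 := by
        rw [Matrix.trace_fin_two] at htr; exact htr
      rw [Matrix.eta_fin_two A] at hc
      obtain ⟨h1, h2, h3⟩ := (char p q r s he _ _ _ _ _).mp hc
      have h0 := (char p q r s he (A 0 0) (A 0 1) (A 1 0) (A 1 1) 0).mpr
        ⟨h1, h2, by linear_combination 2*htr'⟩
      rw [Matrix.eta_fin_two A, h0, zero_smul]
    · rintro ⟨htr, h0⟩
      exact ⟨htr, 0, by rw [h0, zero_smul]⟩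
  · refine ⟨Submodule.span ℂ
      {(!![-(p*s+q*r), 2*p*r; -2*q*s, p*s+q*r] : Matrix (Fin 2) (Fin 2) ℂ)}, ?_, ?_⟩
    · ext A
      simp only [SetLike.mem_coe, Submodule.mem_span_singleton, Set.mem_setOf_eq]
      constructor
      · rintro ⟨u, rfl⟩
        constructor
        · rw [Matrix.trace_fin_two]
          simp [Matrix.smul_apply]
          ring
        · have hM : u • (!![-(p*s+q*r), 2*p*r; -2*q*s, p*s+q*r] : Matrix (Fin 2) (Fin 2) ℂ)
              = !![u * -(p*s+q*r), u*(2*p*r); u*(-2*q*s), u*(p*s+q*r)] := by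
            ext i j; fin_cases i <;> fin_cases j <;> simp [Matrix.smul_apply]
          rw [hM]
          have h0 := (char p q r s he (u * -(p*s+q*r)) (u*(2*p*r)) (u*(-2*q*s)) (u*(p*s+q*r)) 0).mpr
            ⟨by ring, by ring, by ring⟩
          rw [h0, zero_smul]
      · rintro ⟨htr, h0⟩
        have htr' : A 0 0 + A 1 1 = 0 := by
          rw [Matrix.trace_fin_two] at htr; exact htr
        rw [Matrix.eta_fin_two A, show (0 : MvPolynomial (Fin 2) ℂ)
          = (0:ℂ) • ((C p * X 0 + C q * X 1)^2 * (C r * X 0 + C s * X 1)^2)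
          from (zero_smul ℂ _).symm] at h0
        obtain ⟨h1, h2, -⟩ := (char p q r s he _ _ _ _ _).mp h0
        have hab : -(p*s+q*r)*(A 0 1) - 2*p*r*(A 0 0) = 0 := by
          have h : (p*s-q*r) * (-(p*s+q*r)*(A 0 1) - 2*p*r*(A 0 0)) = 0 := by
            linear_combination r^2*h1 + p^2*h2 + (p*q*r^2 - p^2*r*s)*htr'
          exact (mul_eq_zero.mp h).resolve_left he
        have hac : -(p*s+q*r)*(A 1 0) + 2*q*s*(A 0 0) = 0 := by
          have h : (p*s-q*r) * (-(p*s+q*r)*(A 1 0) + 2*q*s*(A 0 0)) = 0 := by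
            linear_combination s^2*h1 + q^2*h2 + (p*q*s^2 - q^2*r*s)*htr'
          exact (mul_eq_zero.mp h).resolve_left he
        have hbc : -2*q*s*(A 0 1) - 2*p*r*(A 1 0) = 0 := by
          have h : (p*s-q*r) * (-2*q*s*(A 0 1) - 2*p*r*(A 1 0)) = 0 := by
            linear_combination 2*r*s*h1 + 2*p*q*h2
          exact (mul_eq_zero.mp h).resolve_left he
        obtain ⟨u, hu1, hu2, hu3⟩ := solve_prop p q r s (A 0 0) (A 0 1) (A 1 0) he hab hac hbc
        refine ⟨u, ?_⟩
        ext i j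
        fin_cases i <;> fin_cases j <;> simp [Matrix.smul_apply]
        · linear_combination hu1
        · linear_combination hu2
        · linear_combination hu3
        · linear_combination (-1:ℂ)*hu1 - htr'
    · apply finrank_span_singleton
      intro h
      apply he
      have h00 := congrFun (congrFun h 0) 0
      have h01 := congrFun (congrFun h 0) 1
      have h10 := congrFun (congrFun h 1) 0
      simp only [Matrix.cons_val', Matrix.cons_val_zero, Matrix.cons_val_one,
        Matrix.head_cons, Matrix.head_fin_const, Matrix.empty_val',
        Matrix.cons_val_fin_one, Matrix.zero_apply, Matrix.of_apply] at h00 h01 h10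
      have h2 : (p*s - q*r)^2 = 0 := by
        linear_combination (-(p*s+q*r))*h00 + (-2*q*s)*h01
      exact (pow_eq_zero_iff (by norm_num : 2 ≠ 0)).mp h2
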